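/- (Theorem 4, item 2.1) Suppose eTRS satisfies the Slater condition and (t*, λ*) with λ* ≥ 0 maximizes k(t,λ) := (Δ+1)λmin(D(t,λ)) − t − λc over t ∈ ℝ, λ ≥ 0, with λmin(D(t*,λ*)) = λmin(A). If λmin(A) < 0 is a simple eigenvalue of A, λ* > 0, and the linear system (A − λmin(A)·I)x = a − (λ*/2)b has two solutions x1 and x2 with ‖x1‖² = Δ, ‖x2‖² = Δ, and (bᵀx1 − c)(bᵀx2 − c) < 0, then strong duality fails for eTRS (p* ≠ d*). -/

import Mathlib

open Matrix

/-- The smallest eigenvalue of a real (symmetric) matrix. -/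
noncomputable def lambdaMin {ι : Type} [Fintype ι] (M : Matrix ι ι ℝ) : ℝ :=
  sInf {μ : ℝ | ∃ v : ι → ℝ, v ≠ 0 ∧ M.mulVec v = μ • v}

/-- The multiplicity of the smallest eigenvalue: the dimension of Null(M - λmin(M)·I). -/
noncomputable def eigMult {ι : Type} [Fintype ι] [DecidableEq ι] (M : Matrix ι ι ℝ) : ℕ :=
  Module.finrank ℝ (LinearMap.ker (M - lambdaMin M • (1 : Matrix ι ι ℝ)).mulVecLin)

/-- The bordered matrix D(t) = [[t, -aᵀ],[-a, A]]. -/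
noncomputable def borderD {n : ℕ} (A : Matrix (Fin n) (Fin n) ℝ) (a : Fin n → ℝ) (t : ℝ) :
    Matrix (Unit ⊕ Fin n) (Unit ⊕ Fin n) ℝ :=
  Matrix.fromBlocks (Matrix.of fun (_ : Unit) (_ : Unit) => t)
    (Matrix.of fun (_ : Unit) (j : Fin n) => -a j)
    (Matrix.of fun (i : Fin n) (_ : Unit) => -a i) A

/-- The bordered matrix D(t,λ) = [[t, (-a + (λ/2)b)ᵀ],[-a + (λ/2)b, A]]. -/
noncomputable def borderD2 {n : ℕ} (A : Matrix (Fin n) (Fin n) ℝ) (a b : Fin n → ℝ)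
    (t l : ℝ) : Matrix (Unit ⊕ Fin n) (Unit ⊕ Fin n) ℝ :=
  borderD A (fun j => a j - (l / 2) * b j) t

/-- The objective xᵀAx - 2aᵀx. -/
noncomputable def objQ {n : ℕ} (A : Matrix (Fin n) (Fin n) ℝ) (a : Fin n → ℝ)
    (x : Fin n → ℝ) : ℝ :=
  x ⬝ᵥ A.mulVec x - 2 * (a ⬝ᵥ x)

/-- The optimal value p* of eTRS. -/
noncomputable def pstar {n : ℕ} (A : Matrix (Fin n) (Fin n) ℝ) (a b : Fin n → ℝ)
    (c Δ : ℝ) : ℝ :=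
  sInf {v : ℝ | ∃ x : Fin n → ℝ, x ⬝ᵥ x ≤ Δ ∧ b ⬝ᵥ x ≤ c ∧ v = objQ A a x}

/-- The Lagrangian of eTRS. -/
noncomputable def lagr {n : ℕ} (A : Matrix (Fin n) (Fin n) ℝ) (a b : Fin n → ℝ)
    (c Δ : ℝ) (x : Fin n → ℝ) (l1 l2 : ℝ) : ℝ :=
  objQ A a x + l1 * (x ⬝ᵥ x - Δ) + l2 * (b ⬝ᵥ x - c)

/-- The Lagrangian dual value d* of eTRS:
the supremum over λ1, λ2 ≥ 0 of inf_x of the Lagrangian, encoded as the supremum of all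
values that are lower bounds of the Lagrangian for some admissible multipliers. -/
noncomputable def dstar {n : ℕ} (A : Matrix (Fin n) (Fin n) ℝ) (a b : Fin n → ℝ)
    (c Δ : ℝ) : ℝ :=
  sSup {v : ℝ | ∃ l1 l2 : ℝ, 0 ≤ l1 ∧ 0 ≤ l2 ∧ ∀ x : Fin n → ℝ, v ≤ lagr A a b c Δ x l1 l2}

/-- x is a global optimal solution of eTRS. -/
def isOptimal {n : ℕ} (A : Matrix (Fin n) (Fin n) ℝ) (a b : Fin n → ℝ)
    (c Δ : ℝ) (x : Fin n → ℝ) : Prop :=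
  x ⬝ᵥ x ≤ Δ ∧ b ⬝ᵥ x ≤ c ∧
    ∀ y : Fin n → ℝ, y ⬝ᵥ y ≤ Δ → b ⬝ᵥ y ≤ c → objQ A a x ≤ objQ A a y

/-- The dual objective k(t,λ) = (Δ+1)·λmin(D(t,λ)) - t - λc. -/
noncomputable def ktl {n : ℕ} (A : Matrix (Fin n) (Fin n) ℝ) (a b : Fin n → ℝ)
    (c Δ : ℝ) (t l : ℝ) : ℝ :=
  (Δ + 1) * lambdaMin (borderD2 A a b t l) - t - l * c
set_option linter.unusedSectionVars false

section Spectral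
variable {ι : Type} [Fintype ι] [DecidableEq ι]

lemma symm_dot {M : Matrix ι ι ℝ} (hM : M.IsHermitian) (x y : ι → ℝ) :
    x ⬝ᵥ M *ᵥ y = (M *ᵥ x) ⬝ᵥ y := by
  have ht : Mᵀ = M := by
    have := hM.eq; simpa [Matrix.conjTranspose_eq_transpose_of_trivial, Matrix.IsHermitian] using this
  rw [dotProduct_mulVec, ← Matrix.mulVec_transpose, ht]

lemma eigSet_eq {M : Matrix ι ι ℝ} (hM : M.IsHermitian) :
    {μ : ℝ | ∃ v : ι → ℝ, v ≠ 0 ∧ M.mulVec v = μ • v} = Set.range hM.eigenvalues := by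
  ext μ
  constructor
  · rintro ⟨v, hv, hMv⟩
    by_contra hr
    simp only [Set.mem_range, not_exists] at hr
    apply hv
    have hrepr : ∀ i, hM.eigenvectorBasis.repr (WithLp.toLp 2 v) i = 0 := by
      intro i
      have h1 : ⇑(hM.eigenvectorBasis i) ⬝ᵥ (M *ᵥ v) = (M *ᵥ ⇑(hM.eigenvectorBasis i)) ⬝ᵥ v :=
        symm_dot hM _ _
      rw [hMv, hM.mulVec_eigenvectorBasis] at h1
      rw [dotProduct_smul, smul_dotProduct] at h1
      have h2 : (μ - hM.eigenvalues i) • (⇑(hM.eigenvectorBasis i) ⬝ᵥ v) = 0 := by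
        simp only [smul_eq_mul] at h1 ⊢; ring_nf; linarith [h1]
      have h3 : ⇑(hM.eigenvectorBasis i) ⬝ᵥ v = 0 := by
        rcases smul_eq_zero.mp h2 with h | h
        · exact absurd (by linarith [sub_eq_zero.mp h] : hM.eigenvalues i = μ) (hr i)
        · exact h
      rw [OrthonormalBasis.repr_apply_apply]
      rw [← h3]
      simp [PiLp.inner_apply, dotProduct, mul_comm]
    have : hM.eigenvectorBasis.repr (WithLp.toLp 2 v) = 0 := by
      ext i; exact hrepr i
    have hv0 : (WithLp.toLp 2 v : EuclideanSpace ℝ ι) = 0 := by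
      apply hM.eigenvectorBasis.repr.injective
      simp [this]
    simpa using congrArg WithLp.ofLp hv0
  · rintro ⟨i, rfl⟩
    refine ⟨⇑(hM.eigenvectorBasis i), ?_, hM.mulVec_eigenvectorBasis i⟩
    have := hM.eigenvectorBasis.orthonormal.ne_zero i
    intro h
    apply this
    ext j
    exact congrFun h j

lemma lambdaMin_le {M : Matrix ι ι ℝ} (hM : M.IsHermitian) {μ : ℝ} {v : ι → ℝ}
    (hv : v ≠ 0) (hMv : M.mulVec v = μ • v) : lambdaMin M ≤ μ := by
  have hbdd : BddBelow {μ : ℝ | ∃ v : ι → ℝ, v ≠ 0 ∧ M.mulVec v = μ • v} := by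
    rw [eigSet_eq hM]; exact (Set.finite_range _).bddBelow
  exact csInf_le hbdd ⟨v, hv, hMv⟩

lemma lambdaMin_has_eigenvector [Nonempty ι] {M : Matrix ι ι ℝ} (hM : M.IsHermitian) :
    ∃ w : ι → ℝ, w ≠ 0 ∧ M.mulVec w = lambdaMin M • w := by
  have hmem : lambdaMin M ∈ {μ : ℝ | ∃ v : ι → ℝ, v ≠ 0 ∧ M.mulVec v = μ • v} := by
    unfold lambdaMin
    apply Set.Nonempty.csInf_mem
    · rw [eigSet_eq hM]; exact Set.range_nonempty _
    · rw [eigSet_eq hM]; exact Set.finite_range _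
  exact hmem

lemma posSemidef_sub_lambdaMin [Nonempty ι] {M : Matrix ι ι ℝ} (hM : M.IsHermitian) :
    (M - lambdaMin M • (1 : Matrix ι ι ℝ)).PosSemidef := by
  have hsm : ((lambdaMin M • (1 : Matrix ι ι ℝ)) : Matrix ι ι ℝ).IsHermitian := by
    simp [Matrix.IsHermitian, Matrix.conjTranspose_smul]
  have hM' : (M - lambdaMin M • (1 : Matrix ι ι ℝ)).IsHermitian := hM.sub hsm
  refine hM'.posSemidef_iff_eigenvalues_nonneg.mpr (fun i => ?_)
  show 0 ≤ hM'.eigenvalues i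
  set μ := hM'.eigenvalues i with hμ
  have hw := hM'.mulVec_eigenvectorBasis i
  have hwne : ⇑(hM'.eigenvectorBasis i) ≠ 0 := by
    have := hM'.eigenvectorBasis.orthonormal.ne_zero i
    intro h; apply this; ext j; exact congrFun h j
  have hMv : M.mulVec ⇑(hM'.eigenvectorBasis i) = (μ + lambdaMin M) • ⇑(hM'.eigenvectorBasis i) := by
    have hexp : (M - lambdaMin M • (1 : Matrix ι ι ℝ)).mulVec ⇑(hM'.eigenvectorBasis i)
        = M.mulVec ⇑(hM'.eigenvectorBasis i) - lambdaMin M • ⇑(hM'.eigenvectorBasis i) := by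
      rw [Matrix.sub_mulVec, Matrix.smul_mulVec, Matrix.one_mulVec]
    rw [hexp] at hw
    rw [sub_eq_iff_eq_add] at hw
    rw [hw, add_smul]
  have := lambdaMin_le hM hwne hMv
  linarith

lemma lambdaMin_quadform [Nonempty ι] {M : Matrix ι ι ℝ} (hM : M.IsHermitian) (y : ι → ℝ) :
    lambdaMin M * (y ⬝ᵥ y) ≤ y ⬝ᵥ M.mulVec y := by
  have h := (posSemidef_sub_lambdaMin hM).dotProduct_mulVec_nonneg y
  have hstar : star y = y := by ext i; simp
  rw [hstar] at h
  have hexp : (M - lambdaMin M • (1 : Matrix ι ι ℝ)).mulVec y = M.mulVec y - lambdaMin M • y := by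
    rw [Matrix.sub_mulVec, Matrix.smul_mulVec, Matrix.one_mulVec]
  rw [hexp, dotProduct_sub, dotProduct_smul, smul_eq_mul] at h
  linarith

lemma dot_self_nonneg (v : ι → ℝ) : 0 ≤ v ⬝ᵥ v :=
  Finset.sum_nonneg fun i _ => mul_self_nonneg (v i)

lemma dot_self_pos {v : ι → ℝ} (hv : v ≠ 0) : 0 < v ⬝ᵥ v := by
  rcases lt_or_eq_of_le (dot_self_nonneg v) with h | h
  · exact h
  · exact absurd (dotProduct_self_eq_zero.mp h.symm) hv

end Spectral

section Border
variable {n : ℕ} (A : Matrix (Fin n) (Fin n) ℝ) (d : Fin n → ℝ) (t : ℝ)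

lemma borderD_isHermitian (hA : A.IsHermitian) : (borderD A d t).IsHermitian := by
  apply Matrix.IsHermitian.fromBlocks
  · ext i j; simp [Matrix.conjTranspose_apply]
  · ext i j; simp [Matrix.conjTranspose_apply]
  · exact hA

lemma borderD_quad (s : ℝ) (x : Fin n → ℝ) :
    (Sum.elim (fun _ => s) x) ⬝ᵥ (borderD A d t) *ᵥ (Sum.elim (fun _ => s) x)
      = t * s ^ 2 - 2 * s * (d ⬝ᵥ x) + x ⬝ᵥ A *ᵥ x := by
  rw [borderD, Matrix.fromBlocks_mulVec, sumElim_dotProduct_sumElim,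
    dotProduct_add, dotProduct_add]
  simp only [Sum.elim_comp_inl, Sum.elim_comp_inr]
  have h1 : (fun _ : Unit => s) ⬝ᵥ ((Matrix.of fun (_ : Unit) (_ : Unit) => t) *ᵥ (fun _ : Unit => s)) = t * s ^ 2 := by
    simp [Matrix.mulVec, dotProduct]; ring
  have h2 : (fun _ : Unit => s) ⬝ᵥ ((Matrix.of fun (_ : Unit) (j : Fin n) => -d j) *ᵥ x) = -(s * (d ⬝ᵥ x)) := by
    simp [Matrix.mulVec, dotProduct, Finset.mul_sum]
  have h3 : x ⬝ᵥ ((Matrix.of fun (i : Fin n) (_ : Unit) => -d i) *ᵥ (fun _ : Unit => s)) = -(s * (d ⬝ᵥ x)) := by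
    simp [Matrix.mulVec, dotProduct, Finset.mul_sum]
    congr 1; funext j; ring
  rw [h1, h2, h3]
  ring

lemma sum_elim_dot_self (s : ℝ) (x : Fin n → ℝ) :
    (Sum.elim (fun _ : Unit => s) x) ⬝ᵥ (Sum.elim (fun _ : Unit => s) x) = s ^ 2 + x ⬝ᵥ x := by
  simp [dotProduct, Fintype.sum_sum_type, sq]

lemma sum_elim_decomp (w : Unit ⊕ Fin n → ℝ) :
    w = Sum.elim (fun _ => w (Sum.inl ())) (fun j => w (Sum.inr j)) := by
  funext z; cases z with
  | inl u => cases u; rfl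
  | inr j => rfl

end Border


lemma quad_coeff_nonneg {al be ga : ℝ} (h : ∀ r : ℝ, 0 ≤ al * r ^ 2 + be * r + ga) :
    0 ≤ al := by
  by_contra hα
  push_neg at hα
  set r := max 1 ((|be| + |ga| + 1) / (-al)) with hrdef
  have hr1 : 1 ≤ r := le_max_left _ _
  have hr2 : (|be| + |ga| + 1) / (-al) ≤ r := le_max_right _ _
  have h0 : 0 < -al := by linarith
  have hαr : al * r ≤ -(|be| + |ga| + 1) := by
    rw [div_le_iff₀ h0] at hr2; nlinarith
  have hrpos : (0:ℝ) ≤ r := by linarith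
  have h1 : al * r * r ≤ -(|be| + |ga| + 1) * r := mul_le_mul_of_nonneg_right hαr hrpos
  have h2 : be * r ≤ |be| * r := mul_le_mul_of_nonneg_right (le_abs_self be) hrpos
  have h3 := h r
  nlinarith [abs_nonneg ga, le_abs_self ga, mul_nonneg (by linarith : (0:ℝ) ≤ r - 1) (by positivity : (0:ℝ) ≤ |ga| + 1)]

lemma quad_diff {n : ℕ} {M : Matrix (Fin n) (Fin n) ℝ} (hsym : Mᵀ = M) {x1 d : Fin n → ℝ}
    (hx1 : M *ᵥ x1 = d) (x : Fin n → ℝ) :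
    (x ⬝ᵥ M *ᵥ x - 2 * (d ⬝ᵥ x)) - (x1 ⬝ᵥ M *ᵥ x1 - 2 * (d ⬝ᵥ x1))
      = (x - x1) ⬝ᵥ M *ᵥ (x - x1) := by
  have hsd : ∀ u v : Fin n → ℝ, u ⬝ᵥ M *ᵥ v = (M *ᵥ u) ⬝ᵥ v := fun u v => by
    rw [Matrix.dotProduct_mulVec, ← Matrix.mulVec_transpose, hsym]
  rw [Matrix.mulVec_sub, sub_dotProduct, dotProduct_sub, dotProduct_sub]
  have e1 : x1 ⬝ᵥ M *ᵥ x = d ⬝ᵥ x := by rw [hsd, hx1]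
  have e2 : x ⬝ᵥ M *ᵥ x1 = d ⬝ᵥ x := by rw [hx1]; exact dotProduct_comm _ _
  have e3 : x1 ⬝ᵥ M *ᵥ x1 = d ⬝ᵥ x1 := by rw [hx1]; exact dotProduct_comm _ _
  rw [e1, e2, e3]
  ring

lemma dot_sub_expand {n : ℕ} (x1 v : Fin n → ℝ) (s : ℝ) :
    (x1 + s • v) ⬝ᵥ (x1 + s • v) = x1 ⬝ᵥ x1 + 2 * s * (x1 ⬝ᵥ v) + s ^ 2 * (v ⬝ᵥ v) := by
  rw [add_dotProduct, dotProduct_add, dotProduct_add,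
    smul_dotProduct, smul_dotProduct, dotProduct_smul,
    dotProduct_smul]
  rw [dotProduct_comm v x1]
  simp only [smul_eq_mul]
  ring

set_option maxHeartbeats 2000000 in
/-- Theorem 4, item 2.1. -/
theorem stmt11 {n : ℕ} (hn : 1 ≤ n) (A : Matrix (Fin n) (Fin n) ℝ) (hA : A.IsHermitian)
    (hnpd : ¬ A.PosDef) (a b : Fin n → ℝ) (c Δ : ℝ) (hΔ : 0 < Δ)
    (hslater : ∃ x : Fin n → ℝ, x ⬝ᵥ x < Δ ∧ b ⬝ᵥ x < c)
    (ts ls : ℝ) (hls : 0 ≤ ls)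
    (hmax : ∀ t l : ℝ, 0 ≤ l → ktl A a b c Δ t l ≤ ktl A a b c Δ ts ls)
    (heq : lambdaMin (borderD2 A a b ts ls) = lambdaMin A)
    (hneg : lambdaMin A < 0) (hsimple : eigMult A = 1) (hls0 : 0 < ls)
    (x1 x2 : Fin n → ℝ)
    (hx1 : (A - lambdaMin A • (1 : Matrix (Fin n) (Fin n) ℝ)).mulVec x1 = a - (ls / 2) • b)
    (hx2 : (A - lambdaMin A • (1 : Matrix (Fin n) (Fin n) ℝ)).mulVec x2 = a - (ls / 2) • b)
    (hn1 : x1 ⬝ᵥ x1 = Δ) (hn2 : x2 ⬝ᵥ x2 = Δ)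
    (hprod : (b ⬝ᵥ x1 - c) * (b ⬝ᵥ x2 - c) < 0) :
    pstar A a b c Δ ≠ dstar A a b c Δ := by
  -- setup
  haveI hne : Nonempty (Fin n) := ⟨⟨0, hn⟩⟩
  set lam := lambdaMin A with hlam
  set M : Matrix (Fin n) (Fin n) ℝ := A - lam • (1 : Matrix (Fin n) (Fin n) ℝ) with hMdef
  set dv : Fin n → ℝ := a - (ls / 2) • b with hdv
  have hAt : Aᵀ = A := by
    have := hA; simpa [Matrix.conjTranspose_eq_transpose_of_trivial, Matrix.IsHermitian] using this
  have hMherm : M.IsHermitian := by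
    rw [hMdef]
    exact hA.sub (by simp [Matrix.IsHermitian, Matrix.conjTranspose_smul])
  have hMsym : Mᵀ = M := by
    have := hMherm; simpa [Matrix.conjTranspose_eq_transpose_of_trivial, Matrix.IsHermitian] using this
  have hMps : M.PosSemidef := posSemidef_sub_lambdaMin hA
  have hMquad : ∀ y : Fin n → ℝ, 0 ≤ y ⬝ᵥ M *ᵥ y := by
    intro y
    have := hMps.dotProduct_mulVec_nonneg y
    simpa using this
  have hMmul : ∀ y : Fin n → ℝ, y ⬝ᵥ M *ᵥ y = y ⬝ᵥ A *ᵥ y - lam * (y ⬝ᵥ y) := by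
    intro y
    rw [hMdef, Matrix.sub_mulVec, Matrix.smul_mulVec, Matrix.one_mulVec,
      dotProduct_sub, dotProduct_smul, smul_eq_mul]
  have hdvdot : ∀ y : Fin n → ℝ, dv ⬝ᵥ y = a ⬝ᵥ y - (ls / 2) * (b ⬝ᵥ y) := by
    intro y
    rw [hdv, sub_dotProduct, smul_dotProduct, smul_eq_mul]
  -- Lagrangian identity
  have hlagr : ∀ x : Fin n → ℝ, lagr A a b c Δ x (-lam) ls
      = (x ⬝ᵥ M *ᵥ x - 2 * (dv ⬝ᵥ x)) + (lam * Δ - ls * c) := by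
    intro x
    rw [lagr, objQ, hMmul, hdvdot]
    ring
  set K := ktl A a b c Δ ts ls with hK
  have hKval : K = (Δ + 1) * lam - ts - ls * c := by
    rw [hK, ktl, heq]
  -- the coefficient vector of borderD2 at level ls
  have hd2eq : (fun j => a j - (ls / 2) * b j) = dv := by
    funext j; rw [hdv]; simp
  -- Step B : K is a lower bound of the Lagrangian at (-lam, ls)
  have hKle : ∀ x : Fin n → ℝ, K ≤ lagr A a b c Δ x (-lam) ls := by
    intro x
    have hDh : (borderD2 A a b ts ls).IsHermitian := by
      rw [borderD2]; exact borderD_isHermitian _ _ _ hA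
    have hquad := lambdaMin_quadform hDh (Sum.elim (fun _ : Unit => (1:ℝ)) x)
    rw [heq] at hquad
    have hz1 : (Sum.elim (fun _ : Unit => (1:ℝ)) x) ⬝ᵥ (Sum.elim (fun _ : Unit => (1:ℝ)) x)
        = 1 + x ⬝ᵥ x := by
      rw [sum_elim_dot_self]; norm_num
    have hz2 : (Sum.elim (fun _ : Unit => (1:ℝ)) x) ⬝ᵥ (borderD2 A a b ts ls) *ᵥ
          (Sum.elim (fun _ : Unit => (1:ℝ)) x)
        = ts - 2 * (dv ⬝ᵥ x) + x ⬝ᵥ A *ᵥ x := by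
      rw [borderD2, borderD_quad, hd2eq]; ring
    rw [hz1, hz2] at hquad
    rw [hlagr, hMmul, hKval]
    nlinarith []
  -- Step C : every dual-feasible value is at most K
  have hdualle : ∀ v l1 l2 : ℝ, 0 ≤ l1 → 0 ≤ l2 →
      (∀ x : Fin n → ℝ, v ≤ lagr A a b c Δ x l1 l2) → v ≤ K := by
    intro v l1 l2 hl1 hl2 hv
    set d2 : Fin n → ℝ := fun j => a j - (l2 / 2) * b j with hd2
    set ga := v + l1 * Δ + l2 * c with hga
    set t := -ga - l1 with ht
    have hv' : ∀ y : Fin n → ℝ, 0 ≤ y ⬝ᵥ A *ᵥ y + l1 * (y ⬝ᵥ y) - 2 * (d2 ⬝ᵥ y) - ga := by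
      intro y
      have := hv y
      rw [lagr, objQ] at this
      have hd2y : d2 ⬝ᵥ y = a ⬝ᵥ y - (l2 / 2) * (b ⬝ᵥ y) := by
        rw [hd2]
        rw [show (fun j => a j - l2 / 2 * b j) = a - (l2/2) • b by funext j; simp]
        rw [sub_dotProduct, smul_dotProduct, smul_eq_mul]
      rw [hd2y, hga]
      linarith
    have hDh : (borderD A d2 t).IsHermitian := borderD_isHermitian _ _ _ hA
    obtain ⟨w, hw0, hww⟩ := lambdaMin_has_eigenvector hDh
    set s := w (Sum.inl ()) with hs
    set x := fun j => w (Sum.inr j) with hx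
    have hwdec : w = Sum.elim (fun _ : Unit => s) x := sum_elim_decomp w
    have hwpos : 0 < w ⬝ᵥ w := dot_self_pos hw0
    have hform : 0 ≤ t * s ^ 2 - 2 * s * (d2 ⬝ᵥ x) + x ⬝ᵥ A *ᵥ x + l1 * (s ^ 2 + x ⬝ᵥ x) := by
      rcases eq_or_ne s 0 with hs0 | hs0
      · -- s = 0 : use the quadratic-coefficient lemma
        have hq : ∀ r : ℝ, 0 ≤ (x ⬝ᵥ A *ᵥ x + l1 * (x ⬝ᵥ x)) * r ^ 2
            + (-(2 * (d2 ⬝ᵥ x))) * r + (-ga) := by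
          intro r
          have h := hv' (r • x)
          simp only [smul_dotProduct, Matrix.mulVec_smul, dotProduct_smul,
            smul_eq_mul] at h
          nlinarith [h]
        have hga0 : 0 ≤ x ⬝ᵥ A *ᵥ x + l1 * (x ⬝ᵥ x) := quad_coeff_nonneg hq
        rw [hs0]
        nlinarith [hga0]
      · -- s ≠ 0 : plug in y = s⁻¹ • x and clear denominators
        have h := hv' (s⁻¹ • x)
        simp only [smul_dotProduct, Matrix.mulVec_smul, dotProduct_smul,
          smul_eq_mul] at h
        have key : 0 ≤ (x ⬝ᵥ A *ᵥ x) + l1 * (x ⬝ᵥ x) - 2 * s * (d2 ⬝ᵥ x) - ga * s ^ 2 := by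
          have h2 : 0 ≤ s ^ 2 * (s⁻¹ * (s⁻¹ * (x ⬝ᵥ A *ᵥ x)) + l1 * (s⁻¹ * (s⁻¹ * (x ⬝ᵥ x)))
              - 2 * (s⁻¹ * (d2 ⬝ᵥ x)) - ga) := mul_nonneg (sq_nonneg s) (by linarith [h])
          have hexp : s ^ 2 * (s⁻¹ * (s⁻¹ * (x ⬝ᵥ A *ᵥ x)) + l1 * (s⁻¹ * (s⁻¹ * (x ⬝ᵥ x)))
              - 2 * (s⁻¹ * (d2 ⬝ᵥ x)) - ga)
              = (x ⬝ᵥ A *ᵥ x) + l1 * (x ⬝ᵥ x) - 2 * s * (d2 ⬝ᵥ x) - ga * s ^ 2 := by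
            field_simp
          linarith [hexp ▸ h2]
        rw [ht]
        nlinarith [key]
    have hDquad : w ⬝ᵥ (borderD A d2 t) *ᵥ w = lambdaMin (borderD A d2 t) * (w ⬝ᵥ w) := by
      rw [hww, dotProduct_smul, smul_eq_mul]
    have hDquad2 : w ⬝ᵥ (borderD A d2 t) *ᵥ w
        = t * s ^ 2 - 2 * s * (d2 ⬝ᵥ x) + x ⬝ᵥ A *ᵥ x := by
      conv_lhs => rw [hwdec]
      rw [borderD_quad]
    have hwdot : w ⬝ᵥ w = s ^ 2 + x ⬝ᵥ x := by
      conv_lhs => rw [hwdec]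
      rw [sum_elim_dot_self]
    have e : lambdaMin (borderD A d2 t) * (w ⬝ᵥ w)
        = t * s ^ 2 - 2 * s * (d2 ⬝ᵥ x) + x ⬝ᵥ A *ᵥ x := hDquad.symm.trans hDquad2
    have hmin : -l1 ≤ lambdaMin (borderD A d2 t) := by
      nlinarith [hform, e, hwdot, hwpos]
    have hktl : ktl A a b c Δ t l2 = (Δ + 1) * lambdaMin (borderD A d2 t) - t - l2 * c := by
      rw [ktl, borderD2]
    have hle := hmax t l2 hl2
    rw [hktl] at hle
    have hD1 : 0 < Δ + 1 := by linarith
    have hvK : v = -t - l1 * (Δ + 1) - l2 * c := by rw [ht, hga]; ring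
    have : v ≤ (Δ + 1) * lambdaMin (borderD A d2 t) - t - l2 * c := by
      rw [hvK]
      nlinarith [hmin, hD1]
    exact this.trans hle
  -- Step D : dstar = K
  have hKmem : K ∈ {v : ℝ | ∃ l1 l2 : ℝ, 0 ≤ l1 ∧ 0 ≤ l2 ∧
      ∀ x : Fin n → ℝ, v ≤ lagr A a b c Δ x l1 l2} :=
    ⟨-lam, ls, by linarith, hls, hKle⟩
  have hdK : dstar A a b c Δ = K := by
    rw [dstar]
    apply le_antisymm
    · apply csSup_le ⟨K, hKmem⟩
      rintro v ⟨l1, l2, hl1, hl2, hv⟩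
      exact hdualle v l1 l2 hl1 hl2 hv
    · apply le_csSup
      · exact ⟨K, by rintro v ⟨l1, l2, hl1, hl2, hv⟩; exact hdualle v l1 l2 hl1 hl2 hv⟩
      · exact hKmem
  -- Step E : pstar > K
  -- the key vectors
  have hx1M : M *ᵥ x1 = dv := hx1
  have hx2M : M *ᵥ x2 = dv := hx2
  have hx12 : x1 ≠ x2 := by
    intro h
    rw [h] at hprod
    nlinarith [sq_nonneg (b ⬝ᵥ x2 - c), hprod]
  -- compactness
  set S : Set (Fin n → ℝ) := {x | x ⬝ᵥ x ≤ Δ ∧ b ⬝ᵥ x ≤ c} with hS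
  have hfc : Continuous fun x : Fin n → ℝ => x ⬝ᵥ x := by
    simp only [dotProduct]
    exact continuous_finset_sum _ fun i _ => (continuous_apply i).mul (continuous_apply i)
  have hgc : Continuous fun x : Fin n → ℝ => b ⬝ᵥ x := by
    simp only [dotProduct]
    exact continuous_finset_sum _ fun i _ => continuous_const.mul (continuous_apply i)
  have hclosed : IsClosed S := by
    rw [hS, Set.setOf_and]
    exact (isClosed_le hfc continuous_const).inter (isClosed_le hgc continuous_const)
  have hbdd : Bornology.IsBounded S := by
    rw [isBounded_iff_forall_norm_le]
    refine ⟨Real.sqrt Δ, ?_⟩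
    rintro x ⟨hx1', hx2'⟩
    rw [pi_norm_le_iff_of_nonneg (Real.sqrt_nonneg _)]
    intro i
    rw [Real.norm_eq_abs]
    apply Real.abs_le_sqrt
    have : x i * x i ≤ x ⬝ᵥ x := by
      rw [dotProduct]
      exact Finset.single_le_sum (f := fun j => x j * x j)
        (fun j _ => mul_self_nonneg (x j)) (Finset.mem_univ i)
    nlinarith [this, hx1']
  have hScompact : IsCompact S := Metric.isCompact_of_isClosed_isBounded hclosed hbdd
  have hSne : S.Nonempty := by
    obtain ⟨x0, h1, h2⟩ := hslater
    exact ⟨x0, le_of_lt h1, le_of_lt h2⟩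
  have hqc : Continuous fun x : Fin n → ℝ => objQ A a x := by
    simp only [objQ, dotProduct, Matrix.mulVec]
    apply Continuous.sub
    · exact continuous_finset_sum _ fun i _ => (continuous_apply i).mul
        (continuous_finset_sum _ fun j _ => continuous_const.mul (continuous_apply j))
    · exact continuous_const.mul
        (continuous_finset_sum _ fun i _ => continuous_const.mul (continuous_apply i))
  obtain ⟨xs, hxsS, hxsmin⟩ := hScompact.exists_isMinOn hSne hqc.continuousOn
  have hxsmin' : ∀ y ∈ S, objQ A a xs ≤ objQ A a y := fun y hy => hxsmin hy
  have hpstar : pstar A a b c Δ = objQ A a xs := by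
    rw [pstar]
    apply IsLeast.csInf_eq
    constructor
    · exact ⟨xs, hxsS.1, hxsS.2, rfl⟩
    · rintro v ⟨x, h1, h2, rfl⟩
      exact hxsmin' x ⟨h1, h2⟩
  -- show K < objQ A a xs
  have hKlt : K < objQ A a xs := by
    by_contra hcon
    push_neg at hcon
    -- q xs ≤ K. Combined with the chain of inequalities, everything is tight
    have hlag : lagr A a b c Δ xs (-lam) ls ≥ K := hKle xs
    have hfeas1 : xs ⬝ᵥ xs ≤ Δ := hxsS.1
    have hfeas2 : b ⬝ᵥ xs ≤ c := hxsS.2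
    have hqeq : objQ A a xs = lagr A a b c Δ xs (-lam) ls
        + lam * (xs ⬝ᵥ xs - Δ) - ls * (b ⬝ᵥ xs - c) := by
      rw [lagr]; ring
    have ht1 : 0 ≤ lam * (xs ⬝ᵥ xs - Δ) := by nlinarith [hneg, hfeas1]
    have ht2 : 0 ≤ -(ls * (b ⬝ᵥ xs - c)) := by nlinarith [hls0, hfeas2]
    have hall : lagr A a b c Δ xs (-lam) ls = K ∧ lam * (xs ⬝ᵥ xs - Δ) = 0 ∧
        ls * (b ⬝ᵥ xs - c) = 0 := by
      constructor
      · linarith [hqeq, hcon, hlag, ht1, ht2]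
      constructor
      · linarith [hqeq, hcon, hlag, ht1, ht2]
      · linarith [hqeq, hcon, hlag, ht1, ht2]
    obtain ⟨heq1, heq2, heq3⟩ := hall
    have hxsn : xs ⬝ᵥ xs = Δ := by
      rcases mul_eq_zero.mp heq2 with h | h
      · exact absurd h (by linarith [hneg])
      · linarith [h]
    have hxsb : b ⬝ᵥ xs = c := by
      rcases mul_eq_zero.mp heq3 with h | h
      · exact absurd h (by linarith [hls0])
      · linarith [h]
    -- xs is a minimizer of the Lagrangian: M (xs - x1) = 0
    have hdiff := quad_diff hMsym hx1M xs
    have hlagx1 : K ≤ lagr A a b c Δ x1 (-lam) ls := hKle x1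
    have hlagdiff : lagr A a b c Δ xs (-lam) ls - lagr A a b c Δ x1 (-lam) ls
        = (xs - x1) ⬝ᵥ M *ᵥ (xs - x1) := by
      rw [hlagr, hlagr]
      rw [← hdiff]
      ring
    have hzero : (xs - x1) ⬝ᵥ M *ᵥ (xs - x1) = 0 := by
      have h1 : (xs - x1) ⬝ᵥ M *ᵥ (xs - x1) ≤ 0 := by
        rw [← hlagdiff, heq1]; linarith [hlagx1]
      linarith [hMquad (xs - x1)]
    have hMzero : M *ᵥ (xs - x1) = 0 := by
      have := hMps.dotProduct_mulVec_zero_iff (xs - x1)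
      rw [show star (xs - x1) = xs - x1 by ext i; simp] at this
      exact this.mp hzero
    -- kernel of M is spanned by x2 - x1
    set v2 : Fin n → ℝ := x2 - x1 with hv2
    have hv2ne : v2 ≠ 0 := by
      rw [hv2]; intro h; exact hx12 (by rw [eq_comm, ← sub_eq_zero]; exact h)
    have hMv2 : M *ᵥ v2 = 0 := by
      rw [hv2, Matrix.mulVec_sub, hx1M, hx2M, sub_self]
    have hker : (Submodule.span ℝ {v2}) = LinearMap.ker M.mulVecLin := by
      apply Submodule.eq_of_le_of_finrank_le
      · rw [Submodule.span_le, Set.singleton_subset_iff]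
        exact LinearMap.mem_ker.mpr (by rw [Matrix.mulVecLin_apply]; exact hMv2)
      · have h1 : Module.finrank ℝ (LinearMap.ker M.mulVecLin) = 1 := hsimple
        rw [h1, finrank_span_singleton hv2ne]
    have hxsker : xs - x1 ∈ LinearMap.ker M.mulVecLin :=
      LinearMap.mem_ker.mpr (by rw [Matrix.mulVecLin_apply]; exact hMzero)
    rw [← hker] at hxsker
    obtain ⟨sc, hsc⟩ := Submodule.mem_span_singleton.mp hxsker
    have hxs_eq : xs = x1 + sc • v2 := by
      rw [hsc]; abel
    -- norm equations
    have hq1 : x1 ⬝ᵥ x1 + 2 * sc * (x1 ⬝ᵥ v2) + sc ^ 2 * (v2 ⬝ᵥ v2) = Δ := by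
      rw [← dot_sub_expand, ← hxs_eq]; exact hxsn
    have hq2 : x1 ⬝ᵥ x1 + 2 * 1 * (x1 ⬝ᵥ v2) + 1 ^ 2 * (v2 ⬝ᵥ v2) = Δ := by
      rw [← dot_sub_expand]
      rw [show x1 + (1:ℝ) • v2 = x2 by rw [hv2]; simp]
      exact hn2
    have hv2pos : 0 < v2 ⬝ᵥ v2 := dot_self_pos hv2ne
    have hsc01 : sc = 0 ∨ sc = 1 := by
      have hk : sc * (sc - 1) * (v2 ⬝ᵥ v2) = 0 := by
        linear_combination hq1 - hn1 - sc * (hq2 - hn1)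
      rcases mul_eq_zero.mp hk with h | h
      · rcases mul_eq_zero.mp h with h' | h'
        · left; exact h'
        · right; linarith [h']
      · exact absurd h (ne_of_gt hv2pos)
    have hbxs : b ⬝ᵥ xs = b ⬝ᵥ x1 ∨ b ⬝ᵥ xs = b ⬝ᵥ x2 := by
      rcases hsc01 with h | h
      · left; rw [hxs_eq, h]; simp
      · right; rw [hxs_eq, h, hv2]; simp
    rcases hbxs with h | h
    · rw [hxsb] at h
      rw [← h] at hprod
      simp at hprod
    · rw [hxsb] at h
      rw [← h] at hprod
      simp at hprod
  rw [hpstar, hdK]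
  intro h
  rw [h] at hKlt
  exact lt_irrefl _ hKlt
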